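/- Let r₁ and r₂ be positive integers, and let Γ₀ ⊆ Γ̂₀ be a normal subgroup, where Γ₀ ≅ H(r₁) and Γ̂₀ ≅ H(r₂). Then the quotient group G₀ = Γ̂₀/Γ₀ is finite, and G₀ contains a normal abelian subgroup of index at most r₁. -/

import Mathlib

/-- The "discrete Heisenberg group" H(r): the group with presentation
⟨δ₁, δ₂, δ₃ ∣ [δ₁,δ₃] = [δ₂,δ₃] = 1, [δ₁,δ₂] = δ₃^r⟩, realized concretely as the
group of upper unitriangular 3×3 rational matrices with (1,2)-entry `a ∈ ℤ`,
(2,3)-entry `b ∈ ℤ` and (1,3)-entry `c/r` with `c ∈ ℤ`; the element ⟨a, b, c⟩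
corresponds to δ₁^a δ₂^b (δ₃-part c), with δ₁ = ⟨1,0,0⟩, δ₂ = ⟨0,1,0⟩,
δ₃ = ⟨0,0,1⟩. -/
@[ext]
structure Heis (r : ℕ) : Type where
  a : ℤ
  b : ℤ
  c : ℤ

namespace Heis

variable {r : ℕ}

instance : Mul (Heis r) :=
  ⟨fun x y => ⟨x.a + y.a, x.b + y.b, x.c + y.c + r * x.a * y.b⟩⟩

instance : One (Heis r) := ⟨⟨0, 0, 0⟩⟩

instance : Inv (Heis r) :=
  ⟨fun x => ⟨-x.a, -x.b, -x.c + r * x.a * x.b⟩⟩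

@[simp] lemma mul_a (x y : Heis r) : (x * y).a = x.a + y.a := rfl
@[simp] lemma mul_b (x y : Heis r) : (x * y).b = x.b + y.b := rfl
@[simp] lemma mul_c (x y : Heis r) : (x * y).c = x.c + y.c + r * x.a * y.b := rfl
@[simp] lemma one_a : (1 : Heis r).a = 0 := rfl
@[simp] lemma one_b : (1 : Heis r).b = 0 := rfl
@[simp] lemma one_c : (1 : Heis r).c = 0 := rfl
@[simp] lemma inv_a (x : Heis r) : x⁻¹.a = -x.a := rfl
@[simp] lemma inv_b (x : Heis r) : x⁻¹.b = -x.b := rfl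
@[simp] lemma inv_c (x : Heis r) : x⁻¹.c = -x.c + r * x.a * x.b := rfl

instance instGroup : Group (Heis r) where
  mul_assoc x y z := by ext <;> simp <;> ring
  one_mul x := by ext <;> simp
  mul_one x := by ext <;> simp
  inv_mul_cancel x := by ext <;> simp <;> ring

/-- The generator δ₁ of H(r). -/
def δ₁ : Heis r := ⟨1, 0, 0⟩

/-- The generator δ₂ of H(r). -/
def δ₂ : Heis r := ⟨0, 1, 0⟩

/-- The generator δ₃ of H(r); it generates the center of H(r) (for r > 0). -/
def δ₃ : Heis r := ⟨0, 0, 1⟩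

end Heis

namespace HeisAux
open Heis

variable {r : ℕ}

lemma zpow_of_a_eq_zero (g : Heis r) (ha : g.a = 0) (n : ℤ) :
    g ^ n = ⟨0, n * g.b, n * g.c⟩ := by
  have hnat : ∀ m : ℕ, g ^ m = (⟨0, m * g.b, m * g.c⟩ : Heis r) := by
    intro m
    induction m with
    | zero => ext <;> simp
    | succ m ih =>
        rw [pow_succ, ih]
        ext
        all_goals simp [ha]
        all_goals push_cast
        all_goals ring
  cases n with
  | ofNat m =>
      rw [Int.ofNat_eq_natCast, zpow_natCast, hnat]
  | negSucc m =>
      rw [zpow_negSucc, hnat]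
      ext
      all_goals simp [Int.negSucc_eq]
      all_goals ring

lemma zpow_of_b_eq_zero (g : Heis r) (hb : g.b = 0) (n : ℤ) :
    g ^ n = ⟨n * g.a, 0, n * g.c⟩ := by
  have hnat : ∀ m : ℕ, g ^ m = (⟨m * g.a, 0, m * g.c⟩ : Heis r) := by
    intro m
    induction m with
    | zero => ext <;> simp
    | succ m ih =>
        rw [pow_succ, ih]
        ext
        all_goals simp [hb]
        all_goals push_cast
        all_goals ring
  cases n with
  | ofNat m =>
      rw [Int.ofNat_eq_natCast, zpow_natCast, hnat]
  | negSucc m =>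
      rw [zpow_negSucc, hnat]
      ext
      all_goals simp [Int.negSucc_eq]
      all_goals ring

lemma zpow_a (g : Heis r) (n : ℤ) : (g ^ n).a = n * g.a := by
  have hnat : ∀ m : ℕ, (g ^ m).a = m * g.a := by
    intro m
    induction m with
    | zero => simp
    | succ m ih =>
        rw [pow_succ]
        simp only [mul_a, ih]
        push_cast
        ring
  cases n with
  | ofNat m =>
      rw [Int.ofNat_eq_natCast, zpow_natCast, hnat]
  | negSucc m =>
      rw [zpow_negSucc]
      simp only [inv_a, hnat, Int.negSucc_eq]
      push_cast
      ring

lemma zpow_b (g : Heis r) (n : ℤ) : (g ^ n).b = n * g.b := by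
  have hnat : ∀ m : ℕ, (g ^ m).b = m * g.b := by
    intro m
    induction m with
    | zero => simp
    | succ m ih =>
        rw [pow_succ]
        simp only [mul_b, ih]
        push_cast
        ring
  cases n with
  | ofNat m =>
      rw [Int.ofNat_eq_natCast, zpow_natCast, hnat]
  | negSucc m =>
      rw [zpow_negSucc]
      simp only [inv_b, hnat, Int.negSucc_eq]
      push_cast
      ring

lemma comm_eq (x y : Heis r) :
    x * y * x⁻¹ * y⁻¹ = (⟨0, 0, r * (x.a * y.b - x.b * y.a)⟩ : Heis r) := by
  ext <;> simp <;> ring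

lemma decomp (x : Heis r) :
    x = δ₁ ^ x.a * δ₂ ^ x.b * δ₃ ^ (x.c - r * x.a * x.b) := by
  rw [zpow_of_b_eq_zero (δ₁ : Heis r) rfl, zpow_of_a_eq_zero (δ₂ : Heis r) rfl,
    zpow_of_a_eq_zero (δ₃ : Heis r) rfl]
  ext <;> simp [δ₁, δ₂, δ₃] <;> ring

lemma d1d2_comm : (δ₁ * δ₂ * δ₁⁻¹ * δ₂⁻¹ : Heis r) = δ₃ ^ (r : ℤ) := by
  rw [comm_eq, zpow_of_a_eq_zero (δ₃ : Heis r) rfl]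
  ext <;> simp [δ₁, δ₂, δ₃]

end HeisAux

/-- Corollary A.8: let Γ₀ ⊆ Γ̂₀ be a normal subgroup with Γ₀ ≅ H(r₁) and
Γ̂₀ ≅ H(r₂). Then the quotient G₀ = Γ̂₀/Γ₀ is finite and contains a normal abelian
subgroup of index at most r₁. -/
theorem stmt_14 (r₁ r₂ : ℕ) (hr₁ : 0 < r₁) (hr₂ : 0 < r₂)
    (Γ₀ : Subgroup (Heis r₂)) [Γ₀.Normal] (hiso : Nonempty (Γ₀ ≃* Heis r₁)) :
    Finite (Heis r₂ ⧸ Γ₀) ∧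
      ∃ A : Subgroup (Heis r₂ ⧸ Γ₀), A.Normal ∧ (∀ x y : A, x * y = y * x) ∧
        A.index ≤ r₁ := by
  classical
  obtain ⟨e⟩ := hiso
  set ψ : Heis r₁ →* Heis r₂ := Γ₀.subtype.comp e.symm.toMonoidHom with hψdef
  have hψinj : Function.Injective ψ :=
    Γ₀.subtype_injective.comp e.symm.injective
  have hψmem : ∀ x, ψ x ∈ Γ₀ := fun x => (e.symm x).2
  have hψsurj : ∀ γ ∈ Γ₀, ∃ x, ψ x = γ := fun γ hγ => ⟨e ⟨γ, hγ⟩, by simp [hψdef]⟩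
  set u := ψ Heis.δ₁ with hu
  set v := ψ Heis.δ₂ with hv
  set w := ψ Heis.δ₃ with hw
  set D : ℤ := u.a * v.b - u.b * v.a with hDdef
  -- the commutator relation
  have hcommrel : (⟨0, 0, (r₂ : ℤ) * (u.a * v.b - u.b * v.a)⟩ : Heis r₂) = w ^ (r₁ : ℤ) := by
    rw [← HeisAux.comm_eq, hu, hv, hw, ← map_inv, ← map_inv, ← map_mul, ← map_mul, ← map_mul,
      ← map_zpow, HeisAux.d1d2_comm]
  have hwa : w.a = 0 := by
    have := congrArg Heis.a hcommrel
    rw [HeisAux.zpow_a] at this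
    simp at this
    rcases this with h | h
    · exact absurd h (by exact_mod_cast hr₁.ne')
    · exact h
  have hwb : w.b = 0 := by
    have := congrArg Heis.b hcommrel
    rw [HeisAux.zpow_b] at this
    simp at this
    rcases this with h | h
    · exact absurd h (by exact_mod_cast hr₁.ne')
    · exact h
  have hD : (r₂ : ℤ) * D = (r₁ : ℤ) * w.c := by
    have := congrArg Heis.c hcommrel
    rw [HeisAux.zpow_of_a_eq_zero w hwa] at this
    simpa [hDdef] using this
  have hwc0 : w.c ≠ 0 := by
    intro h
    have hw1 : w = 1 := by
      ext
      · exact hwa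
      · exact hwb
      · exact h
    have : (Heis.δ₃ : Heis r₁) = 1 := hψinj (by rw [← hw, hw1, map_one])
    have := congrArg Heis.c this
    simp [Heis.δ₃] at this
  have hD0 : D ≠ 0 := by
    intro h
    apply hwc0
    have := hD
    rw [h, mul_zero] at this
    have := this.symm
    rcases mul_eq_zero.mp this with h' | h'
    · exact absurd h' (by exact_mod_cast hr₁.ne')
    · exact h'
  -- components of ψ x
  have hψab : ∀ x : Heis r₁, (ψ x).a = x.a * u.a + x.b * v.a ∧
      (ψ x).b = x.a * u.b + x.b * v.b := by
    intro x
    have hx := HeisAux.decomp x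
    constructor
    · conv_lhs => rw [hx]
      rw [map_mul, map_mul, map_zpow, map_zpow, map_zpow]
      simp [HeisAux.zpow_a, hwa, ← hu, ← hv, ← hw]
    · conv_lhs => rw [hx]
      rw [map_mul, map_mul, map_zpow, map_zpow, map_zpow]
      simp [HeisAux.zpow_b, hwb, ← hu, ← hv, ← hw]
  -- elements of Γ₀ that are "central-looking" are powers of w
  have hZin : ∀ c : ℤ, w.c ∣ c → (⟨0, 0, c⟩ : Heis r₂) ∈ Γ₀ := by
    intro c ⟨k, hk⟩
    have : (⟨0, 0, c⟩ : Heis r₂) = w ^ k := by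
      rw [HeisAux.zpow_of_a_eq_zero w hwa]
      ext <;> simp [hwb, hk, mul_comm]
    rw [this]
    exact Subgroup.zpow_mem _ (hψmem _) k
  have hcentral : ∀ γ ∈ Γ₀, γ.a = 0 → γ.b = 0 → w.c ∣ γ.c := by
    intro γ hγ ha hb
    obtain ⟨x, rfl⟩ := hψsurj γ hγ
    obtain ⟨hA, hB⟩ := hψab x
    rw [ha] at hA; rw [hb] at hB
    have hxa : x.a = 0 := by
      have h1 : x.a * D = 0 := by
        rw [hDdef]
        linear_combination v.b * hA.symm - v.a * hB.symm
      rcases mul_eq_zero.mp h1 with h | h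
      · exact h
      · exact absurd h hD0
    have hxb : x.b = 0 := by
      have h1 : x.b * D = 0 := by
        rw [hDdef]
        linear_combination u.a * hB.symm - u.b * hA.symm
      rcases mul_eq_zero.mp h1 with h | h
      · exact h
      · exact absurd h hD0
    have hx3 : x = Heis.δ₃ ^ x.c := by
      rw [HeisAux.zpow_of_a_eq_zero (Heis.δ₃ : Heis r₁) rfl]
      ext <;> simp [Heis.δ₃, hxa, hxb]
    rw [hx3, map_zpow, ← hw, HeisAux.zpow_of_a_eq_zero w hwa]
    exact ⟨x.c, mul_comm _ _⟩
  -- normality consequences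
  have hnorm : ∀ γ ∈ Γ₀, w.c ∣ (r₂ : ℤ) * γ.a ∧ w.c ∣ (r₂ : ℤ) * γ.b := by
    intro γ hγ
    have key : ∀ h : Heis r₂, w.c ∣ (r₂ : ℤ) * (h.a * γ.b - h.b * γ.a) := by
      intro h
      have hmem : h * γ * h⁻¹ * γ⁻¹ ∈ Γ₀ :=
        Subgroup.mul_mem _ (‹Γ₀.Normal›.conj_mem γ hγ h) (Subgroup.inv_mem _ hγ)
      rw [HeisAux.comm_eq] at hmem
      simpa using hcentral _ hmem rfl rfl
    constructor
    · simpa using key ⟨0, -1, 0⟩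
    · simpa using key ⟨1, 0, 0⟩
  -- arithmetic: t = w.c / gcd(w.c, r₂)
  set g : ℕ := Int.gcd w.c (r₂ : ℤ) with hgdef
  have hg0 : 0 < g := Int.gcd_pos_of_ne_zero_left _ hwc0
  set t : ℤ := w.c / (g : ℤ) with htdef
  have htmul : (g : ℤ) * t = w.c := Int.mul_ediv_cancel' (Int.gcd_dvd_left _ _)
  have ht0 : t ≠ 0 := by
    intro h
    apply hwc0
    rw [← htmul, h, mul_zero]
  have hr2t : w.c ∣ (r₂ : ℤ) * t := by
    refine ⟨(r₂ : ℤ) / (g : ℤ), ?_⟩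
    have h1 : ((r₂ : ℤ) / (g : ℤ)) * (g : ℤ) = (r₂ : ℤ) :=
      Int.ediv_mul_cancel (Int.gcd_dvd_right _ _)
    calc (r₂ : ℤ) * t = (((r₂ : ℤ) / (g : ℤ)) * (g : ℤ)) * t := by rw [h1]
      _ = w.c * ((r₂ : ℤ) / (g : ℤ)) := by rw [mul_assoc, htmul]; ring
  have hkey : ∀ x : ℤ, w.c ∣ (r₂ : ℤ) * x → t ∣ x := by
    intro x hx
    have hcop : IsCoprime t ((r₂ : ℤ) / (g : ℤ)) := by
      rw [Int.isCoprime_iff_gcd_eq_one, htdef]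
      exact Int.gcd_div_gcd_div_gcd hg0
    have h1 : ((r₂ : ℤ) / (g : ℤ)) * (g : ℤ) = (r₂ : ℤ) :=
      Int.ediv_mul_cancel (Int.gcd_dvd_right _ _)
    have h2 : (g : ℤ) * t ∣ (g : ℤ) * (((r₂ : ℤ) / (g : ℤ)) * x) := by
      rw [htmul, show (g : ℤ) * (((r₂ : ℤ) / (g : ℤ)) * x)
        = (((r₂ : ℤ) / (g : ℤ)) * (g : ℤ)) * x by ring, h1]
      exact hx
    have h3 : t ∣ ((r₂ : ℤ) / (g : ℤ)) * x :=
      (mul_dvd_mul_iff_left (by exact_mod_cast hg0.ne' : (g : ℤ) ≠ 0)).mp h2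
    exact hcop.dvd_of_dvd_mul_left h3
  have htua : t ∣ u.a := hkey _ (hnorm u (hψmem _)).1
  have htub : t ∣ u.b := hkey _ (hnorm u (hψmem _)).2
  have htva : t ∣ v.a := hkey _ (hnorm v (hψmem _)).1
  have htvb : t ∣ v.b := hkey _ (hnorm v (hψmem _)).2
  have htb : ∀ γ ∈ Γ₀, t ∣ γ.b := by
    intro γ hγ
    obtain ⟨x, rfl⟩ := hψsurj γ hγ
    rw [(hψab x).2]
    exact dvd_add (Dvd.dvd.mul_left htub _) (Dvd.dvd.mul_left htvb _)
  -- t ∣ r₁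
  have htr₁ : t ∣ (r₁ : ℤ) := by
    have h1 : t * t ∣ D := by
      rw [hDdef]
      exact dvd_sub (mul_dvd_mul htua htvb) (mul_dvd_mul htub htva)
    have h2 : t * w.c ∣ (r₁ : ℤ) * w.c := by
      rw [← hD]
      calc t * w.c ∣ t * ((r₂ : ℤ) * t) := mul_dvd_mul_left t hr2t
        _ = (r₂ : ℤ) * (t * t) := by ring
        _ ∣ (r₂ : ℤ) * D := mul_dvd_mul_left _ h1
    exact (mul_dvd_mul_iff_right hwc0).mp h2
  have htle : t.natAbs ≤ r₁ := by
    have : t.natAbs ∣ r₁ := by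
      have := Int.natAbs_dvd_natAbs.mpr htr₁
      simpa using this
    exact Nat.le_of_dvd hr₁ this
  -- the subgroup L₀ = {x | t ∣ x.b}
  set L₀ : Subgroup (Heis r₂) :=
    { carrier := {x : Heis r₂ | t ∣ x.b}
      mul_mem' := fun hx hy => by simpa using dvd_add hx hy
      one_mem' := by simp
      inv_mem' := fun hx => by simpa using dvd_neg.mpr hx } with hL₀def
  have hL₀mem : ∀ x : Heis r₂, x ∈ L₀ ↔ t ∣ x.b := fun x => Iff.rfl
  have hL₀N : L₀.Normal := by
    constructor
    intro n hn gg
    rw [hL₀mem] at hn ⊢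
    simpa using hn
  have hsub : Γ₀ ≤ L₀ := fun γ hγ => (hL₀mem γ).mpr (htb γ hγ)
  -- the image A in the quotient
  refine ⟨?_, Subgroup.map (QuotientGroup.mk' Γ₀) L₀,
    hL₀N.map _ (QuotientGroup.mk'_surjective Γ₀), ?_, ?_⟩
  · -- finiteness of the quotient
    have hDn : (0 : ℤ) < (D.natAbs : ℤ) := by exact_mod_cast Int.natAbs_pos.mpr hD0
    have hWn : (0 : ℤ) < (w.c.natAbs : ℤ) := by exact_mod_cast Int.natAbs_pos.mpr hwc0
    refine Finite.of_surjective
      (fun p : Fin D.natAbs × Fin D.natAbs × Fin w.c.natAbs =>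
        QuotientGroup.mk (s := Γ₀)
          (⟨((p.1 : ℕ) : ℤ), ((p.2.1 : ℕ) : ℤ), ((p.2.2 : ℕ) : ℤ)⟩ : Heis r₂)) ?_
    intro q
    induction q using QuotientGroup.induction_on with
    | H h =>
      set i : ℤ := h.a % (D.natAbs : ℤ) with hidef
      set j : ℤ := h.b % (D.natAbs : ℤ) with hjdef
      have hi0 : 0 ≤ i := Int.emod_nonneg _ hDn.ne'
      have hilt : i < (D.natAbs : ℤ) := Int.emod_lt_of_pos _ hDn
      have hj0 : 0 ≤ j := Int.emod_nonneg _ hDn.ne'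
      have hjlt : j < (D.natAbs : ℤ) := Int.emod_lt_of_pos _ hDn
      have hdvd1 : D ∣ (h.a - i) := by
        refine Int.natAbs_dvd.mp ⟨h.a / (D.natAbs : ℤ), ?_⟩
        rw [hidef, Int.emod_def]; ring
      have hdvd2 : D ∣ (h.b - j) := by
        refine Int.natAbs_dvd.mp ⟨h.b / (D.natAbs : ℤ), ?_⟩
        rw [hjdef, Int.emod_def]; ring
      obtain ⟨s, hs⟩ := hdvd1
      obtain ⟨tt, htt⟩ := hdvd2
      set x : ℤ := s * v.b - tt * v.a with hxdef
      set y : ℤ := tt * u.a - s * u.b with hydef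
      have hg₁mem : u ^ x * v ^ y ∈ Γ₀ :=
        mul_mem (Subgroup.zpow_mem _ (hψmem _) _) (Subgroup.zpow_mem _ (hψmem _) _)
      have hg₁a : (u ^ x * v ^ y).a = h.a - i := by
        rw [Heis.mul_a, HeisAux.zpow_a, HeisAux.zpow_a, hxdef, hydef]
        rw [hDdef] at hs
        linear_combination -hs
      have hg₁b : (u ^ x * v ^ y).b = h.b - j := by
        rw [Heis.mul_b, HeisAux.zpow_b, HeisAux.zpow_b, hxdef, hydef]
        rw [hDdef] at htt
        linear_combination -htt
      set cc : ℤ := h.c - (u ^ x * v ^ y).c - (r₂ : ℤ) * (u ^ x * v ^ y).a * j with hccdef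
      set k : ℤ := cc % (w.c.natAbs : ℤ) with hkdef
      have hk0 : 0 ≤ k := Int.emod_nonneg _ hWn.ne'
      have hklt : k < (w.c.natAbs : ℤ) := Int.emod_lt_of_pos _ hWn
      have hdvd3 : w.c ∣ cc - k := by
        refine Int.natAbs_dvd.mp ⟨cc / (w.c.natAbs : ℤ), ?_⟩
        rw [hkdef, Int.emod_def]; ring
      have hg₂mem : (⟨0, 0, cc - k⟩ : Heis r₂) ∈ Γ₀ := hZin _ hdvd3
      refine ⟨⟨⟨i.toNat, by omega⟩, ⟨j.toNat, by omega⟩, ⟨k.toNat, by omega⟩⟩, ?_⟩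
      simp only
      rw [show ((i.toNat : ℕ) : ℤ) = i by omega, show ((j.toNat : ℕ) : ℤ) = j by omega,
        show ((k.toNat : ℕ) : ℤ) = k by omega]
      rw [QuotientGroup.eq]
      have hfact : h = ((u ^ x * v ^ y) * ⟨0, 0, cc - k⟩) * ⟨i, j, k⟩ := by
        ext
        · show h.a = (u ^ x * v ^ y).a + 0 + i
          rw [hg₁a]; ring
        · show h.b = (u ^ x * v ^ y).b + 0 + j
          rw [hg₁b]; ring
        · show h.c = ((u ^ x * v ^ y).c + (cc - k) + (r₂ : ℤ) * (u ^ x * v ^ y).a * 0) + k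
            + (r₂ : ℤ) * ((u ^ x * v ^ y).a + 0) * j
          rw [hccdef]; ring
      rw [hfact, show (⟨i, j, k⟩ : Heis r₂)⁻¹ * (((u ^ x * v ^ y) * ⟨0, 0, cc - k⟩) * ⟨i, j, k⟩)
        = (⟨i, j, k⟩ : Heis r₂)⁻¹ * ((u ^ x * v ^ y) * ⟨0, 0, cc - k⟩) * ⟨i, j, k⟩ by group]
      exact ‹Γ₀.Normal›.conj_mem' _ (mul_mem hg₁mem hg₂mem) _
  · -- abelian
    rintro ⟨x, hx⟩ ⟨y, hy⟩
    obtain ⟨gx, hgx, rfl⟩ := hx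
    obtain ⟨gy, hgy, rfl⟩ := hy
    apply Subtype.ext
    show QuotientGroup.mk' Γ₀ gx * QuotientGroup.mk' Γ₀ gy
      = QuotientGroup.mk' Γ₀ gy * QuotientGroup.mk' Γ₀ gx
    rw [← map_mul, ← map_mul]
    show QuotientGroup.mk (gx * gy) = QuotientGroup.mk (gy * gx)
    rw [QuotientGroup.eq]
    have hE : (gx * gy)⁻¹ * (gy * gx)
        = (⟨0, 0, (r₂ : ℤ) * (gy.a * gx.b - gy.b * gx.a)⟩ : Heis r₂) := by
      ext <;> simp <;> ring
    rw [hE]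
    apply hZin
    obtain ⟨k1, hk1⟩ := (hL₀mem gx).mp hgx
    obtain ⟨k2, hk2⟩ := (hL₀mem gy).mp hgy
    calc w.c ∣ (r₂ : ℤ) * t := hr2t
      _ ∣ (r₂ : ℤ) * (gy.a * gx.b - gy.b * gx.a) := by
          refine mul_dvd_mul_left _ ?_
          rw [hk1, hk2]
          exact ⟨gy.a * k1 - k2 * gx.a, by ring⟩
  · -- index bound
    have hAL : (Subgroup.map (QuotientGroup.mk' Γ₀) L₀).index = L₀.index := by
      rw [Subgroup.index_map, QuotientGroup.ker_mk', sup_eq_left.mpr hsub,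
        MonoidHom.range_eq_top.mpr (QuotientGroup.mk'_surjective Γ₀), Subgroup.index_top, mul_one]
    rw [hAL]
    have hsurj : Function.Surjective
        (fun k : Fin t.natAbs => QuotientGroup.mk (s := L₀) (⟨0, ((k : ℕ) : ℤ), 0⟩ : Heis r₂)) := by
      intro q
      induction q using QuotientGroup.induction_on with
      | H gg =>
        have hn0 : (0 : ℤ) < (t.natAbs : ℤ) := by
          exact_mod_cast Int.natAbs_pos.mpr ht0
        set j : ℤ := gg.b % (t.natAbs : ℤ) with hjdef
        have hj0 : 0 ≤ j := Int.emod_nonneg _ hn0.ne'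
        have hjlt : j < (t.natAbs : ℤ) := Int.emod_lt_of_pos _ hn0
        refine ⟨⟨j.toNat, by omega⟩, ?_⟩
        simp only
        rw [show ((j.toNat : ℕ) : ℤ) = j by omega, QuotientGroup.eq, hL₀mem]
        have : t ∣ (t.natAbs : ℤ) := Int.dvd_natAbs.mpr dvd_rfl
        calc t ∣ (t.natAbs : ℤ) * (gg.b / (t.natAbs : ℤ)) := Dvd.dvd.mul_right this _
          _ = (⟨0, j, 0⟩ : Heis r₂)⁻¹.b + gg.b := by
              show _ = -j + gg.b
              rw [hjdef, Int.emod_def]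
              ring
    calc L₀.index = Nat.card (Heis r₂ ⧸ L₀) := rfl
      _ ≤ Nat.card (Fin t.natAbs) := Nat.card_le_card_of_surjective _ hsurj
      _ = t.natAbs := by simp
      _ ≤ r₁ := htle
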